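/- Let x ∈ N and n' ∈ N'(w). Then the functions φ_{V₁}(x) = b₀ and φ_{V₂}(x) = b₀d₁ − b₁, computed from the power series coefficients of the entries of a matrix, satisfy φ_{V₁}(x·n') = φ_{V₁}(x) and φ_{V₂}(x·n') = φ_{V₂}(x); that is, these determinantal expressions are invariant under right multiplication by N'(w). -/

import Mathlib

open PowerSeries

/-- Membership in the unipotent group `N` of the affine Kac–Moody group of type `Ã₁`:
matrices over `ℂ[[z]]` with determinant 1, constant terms of the diagonal entries
equal to `1`, and constant term of the lower-left entry equal to `0`. -/
def memN (x : Matrix (Fin 2) (Fin 2) (PowerSeries ℂ)) : Prop :=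
  x.det = 1 ∧
    constantCoeff (x 0 0) = 1 ∧ constantCoeff (x 1 1) = 1 ∧
    constantCoeff (x 1 0) = 0

/-- Membership in the subgroup `N'(w)` for `w = s₂s₁s₂s₁`: elements of `N` whose
upper-right entry is divisible by `z⁴`. -/
def memN' (x : Matrix (Fin 2) (Fin 2) (PowerSeries ℂ)) : Prop :=
  memN x ∧ (PowerSeries.X : PowerSeries ℂ) ^ 4 ∣ x 0 1

/-- The functions `φ_{V₁} = b₀` and `φ_{V₂} = b₀d₁ − b₁` on `N` are invariant under
right multiplication by `N'(w)`. -/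
theorem phi_V1_V2_Nprime_invariant
    (x n' : Matrix (Fin 2) (Fin 2) (PowerSeries ℂ))
    (hx : memN x) (hn' : memN' n') :
    (coeff 0) ((x * n') 0 1) = (coeff 0) (x 0 1) ∧
    (coeff 0) ((x * n') 0 1) * (coeff 1) ((x * n') 1 1)
        - (coeff 1) ((x * n') 0 1)
      = (coeff 0) (x 0 1) * (coeff 1) (x 1 1) - (coeff 1) (x 0 1) := by
  obtain ⟨⟨_, ha, hd, hc⟩, hdvd⟩ := hn'
  obtain ⟨_, hxa, hxd, hxc⟩ := hx
  rw [PowerSeries.X_pow_dvd_iff] at hdvd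
  have hb0 : (coeff 0) (n' 0 1) = 0 := hdvd 0 (by norm_num)
  have hb1 : (coeff 1) (n' 0 1) = 0 := hdvd 1 (by norm_num)
  have hb0' : (constantCoeff) (n' 0 1) = 0 := by rw [← PowerSeries.coeff_zero_eq_constantCoeff]; exact hb0
  have e01 : (x * n') 0 1 = x 0 0 * n' 0 1 + x 0 1 * n' 1 1 := by
    simp [Matrix.mul_apply, Fin.sum_univ_two]
  have e11 : (x * n') 1 1 = x 1 0 * n' 0 1 + x 1 1 * n' 1 1 := by
    simp [Matrix.mul_apply, Fin.sum_univ_two]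
  rw [e01, e11]
  simp only [map_add, PowerSeries.coeff_one_mul, hb0, hb1, hb0',
    PowerSeries.coeff_zero_eq_constantCoeff, map_mul, hd, hc, hxd]
  constructor
  · ring
  · ring
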